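/- arXiv:2409.02254 — 3 statements merged into one kernel-verified Lean document; each statement's English description precedes it below -/
import Mathlib

section
/- If the system {sin(ρₙ t)}_{n>p} is a Riesz basis in L₂(0,2π), then the system {ξₙ}_{n>p} of pairs ξₙ = (sin(ρₙ t)·cos(ρₙ π), −cos(ρₙ t)·sin(ρₙ π)) is a Riesz basis in L₂(0,π) ⊕ L₂(0,π). -/
open MeasureTheory Set Finset Real

/-- First component of `ξₙ`: `cos(ρₙπ)·sin(ρₙ t)`. -/
noncomputable def xi1 (ρ : ℂ) (t : ℝ) : ℂ :=
  Complex.cos (ρ * (Real.pi : ℂ)) * Complex.sin (ρ * (t : ℂ))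

/-- Second component of `ξₙ`: `−sin(ρₙπ)·cos(ρₙ t)`. -/
noncomputable def xi2 (ρ : ℂ) (t : ℝ) : ℂ :=
  -(Complex.sin (ρ * (Real.pi : ℂ))) * Complex.cos (ρ * (t : ℂ))

open scoped ENNReal

lemma xi1_eq (ρ : ℂ) (t : ℝ) : xi1 ρ t =
    (Complex.sin (ρ * ((Real.pi + t : ℝ) : ℂ)) - Complex.sin (ρ * ((Real.pi - t : ℝ) : ℂ))) / 2 := by
  unfold xi1; push_cast
  rw [mul_add, mul_sub, Complex.sin_add, Complex.sin_sub]; ring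

lemma xi2_eq (ρ : ℂ) (t : ℝ) : xi2 ρ t =
    -((Complex.sin (ρ * ((Real.pi + t : ℝ) : ℂ)) + Complex.sin (ρ * ((Real.pi - t : ℝ) : ℂ))) / 2) := by
  unfold xi2; push_cast
  rw [mul_add, mul_sub, Complex.sin_add, Complex.sin_sub]; ring

lemma par_law (a b : ℂ) : ‖(a - b) / 2‖ ^ 2 + ‖-((a + b) / 2)‖ ^ 2 = (‖a‖ ^ 2 + ‖b‖ ^ 2) / 2 := by
  have h := parallelogram_law_with_norm ℝ a b
  rw [norm_neg, norm_div, norm_div]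
  rw [div_pow, div_pow]
  have h2 : ‖(2:ℂ)‖ ^ 2 = 4 := by norm_num
  rw [h2]
  nlinarith [h]

lemma integral_split (F : ℝ → ℂ) (hF : Continuous F) :
    (∫ t in Ioc (0:ℝ) Real.pi, ‖(F (Real.pi + t) - F (Real.pi - t)) / 2‖ ^ 2)
      + (∫ t in Ioc (0:ℝ) Real.pi, ‖-((F (Real.pi + t) + F (Real.pi - t)) / 2)‖ ^ 2)
    = (1/2) * ∫ t in Ioc (0:ℝ) (2 * Real.pi), ‖F t‖ ^ 2 := by
  have hπ : (0:ℝ) ≤ Real.pi := Real.pi_pos.le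
  have h2π : (0:ℝ) ≤ 2 * Real.pi := by positivity
  rw [← intervalIntegral.integral_of_le hπ, ← intervalIntegral.integral_of_le hπ,
    ← intervalIntegral.integral_of_le h2π]
  have c1 : Continuous fun t : ℝ => ‖(F (Real.pi + t) - F (Real.pi - t)) / 2‖ ^ 2 := by
    fun_prop
  have c2 : Continuous fun t : ℝ => ‖-((F (Real.pi + t) + F (Real.pi - t)) / 2)‖ ^ 2 := by
    fun_prop
  have cp : Continuous fun t : ℝ => ‖F (Real.pi + t)‖ ^ 2 := by fun_prop
  have cm : Continuous fun t : ℝ => ‖F (Real.pi - t)‖ ^ 2 := by fun_prop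
  rw [← intervalIntegral.integral_add (c1.intervalIntegrable _ _) (c2.intervalIntegrable _ _)]
  have : (∫ t in (0:ℝ)..Real.pi,
      (‖(F (Real.pi + t) - F (Real.pi - t)) / 2‖ ^ 2
        + ‖-((F (Real.pi + t) + F (Real.pi - t)) / 2)‖ ^ 2))
      = ∫ t in (0:ℝ)..Real.pi, ((‖F (Real.pi + t)‖ ^ 2 + ‖F (Real.pi - t)‖ ^ 2) / 2) := by
    apply intervalIntegral.integral_congr
    intro t _
    exact par_law _ _
  rw [this]
  have : (∫ t in (0:ℝ)..Real.pi, ((‖F (Real.pi + t)‖ ^ 2 + ‖F (Real.pi - t)‖ ^ 2) / 2))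
      = ((∫ t in (0:ℝ)..Real.pi, ‖F (Real.pi + t)‖ ^ 2)
        + ∫ t in (0:ℝ)..Real.pi, ‖F (Real.pi - t)‖ ^ 2) / 2 := by
    rw [← intervalIntegral.integral_add (cp.intervalIntegrable _ _) (cm.intervalIntegrable _ _)]
    simp_rw [← intervalIntegral.integral_div]
  rw [this]
  have e1 : (∫ t in (0:ℝ)..Real.pi, ‖F (Real.pi + t)‖ ^ 2)
      = ∫ u in Real.pi..(2 * Real.pi), ‖F u‖ ^ 2 := by
    have := intervalIntegral.integral_comp_add_left (a := (0:ℝ)) (b := Real.pi)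
      (fun u => ‖F u‖ ^ 2) Real.pi
    rw [this]; norm_num [two_mul]
  have e2 : (∫ t in (0:ℝ)..Real.pi, ‖F (Real.pi - t)‖ ^ 2)
      = ∫ u in (0:ℝ)..Real.pi, ‖F u‖ ^ 2 := by
    have := intervalIntegral.integral_comp_sub_left (a := (0:ℝ)) (b := Real.pi)
      (fun u => ‖F u‖ ^ 2) Real.pi
    rw [this]; norm_num
  rw [e1, e2]
  have := intervalIntegral.integral_add_adjacent_intervals (a := (0:ℝ)) (b := Real.pi)
    (c := 2 * Real.pi) (f := fun u => ‖F u‖ ^ 2) (μ := volume)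
    ((by fun_prop : Continuous fun u : ℝ => ‖F u‖ ^ 2).intervalIntegrable _ _)
    ((by fun_prop : Continuous fun u : ℝ => ‖F u‖ ^ 2).intervalIntegrable _ _)
  rw [← this]; ring

lemma sum_xi1 (s : Finset ℕ) (ρ : ℕ → ℂ) (b : ℕ → ℂ) (t : ℝ) :
    ∑ n ∈ s, b n * xi1 (ρ n) t =
      ((∑ n ∈ s, b n * Complex.sin (ρ n * ((Real.pi + t : ℝ) : ℂ)))
        - ∑ n ∈ s, b n * Complex.sin (ρ n * ((Real.pi - t : ℝ) : ℂ))) / 2 := by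
  rw [← Finset.sum_sub_distrib, Finset.sum_div]
  refine Finset.sum_congr rfl fun n _ => ?_
  rw [xi1_eq]; ring

lemma sum_xi2 (s : Finset ℕ) (ρ : ℕ → ℂ) (b : ℕ → ℂ) (t : ℝ) :
    ∑ n ∈ s, b n * xi2 (ρ n) t =
      -(((∑ n ∈ s, b n * Complex.sin (ρ n * ((Real.pi + t : ℝ) : ℂ)))
        + ∑ n ∈ s, b n * Complex.sin (ρ n * ((Real.pi - t : ℝ) : ℂ))) / 2) := by
  rw [← Finset.sum_add_distrib, Finset.sum_div, ← Finset.sum_neg_distrib]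
  refine Finset.sum_congr rfl fun n _ => ?_
  rw [xi2_eq]; ring

lemma memℒp_two_add_measure {α : Type*} [MeasurableSpace α] {μ ν : Measure α} {f : α → ℂ}
    (h1 : MemLp f 2 μ) (h2 : MemLp f 2 ν) : MemLp f 2 (μ + ν) := by
  have hm : AEStronglyMeasurable f (μ + ν) := h1.1.add_measure h2.1
  rw [memLp_two_iff_integrable_sq_norm hm]
  exact ((memLp_two_iff_integrable_sq_norm h1.1).1 h1).add_measure
    ((memLp_two_iff_integrable_sq_norm h2.1).1 h2)

lemma memℒp_mul_integrable {α : Type*} [MeasurableSpace α] {μ : Measure α} {f g : α → ℂ}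
    (hf : MemLp f 2 μ) (hg : MemLp g 2 μ) : Integrable (fun x => f x * g x) μ := by
  rw [← memLp_one_iff_integrable]
  have := hg.smul hf (p := 2) (q := 2) (r := 1)
    (hpqr := ⟨by rw [ENNReal.inv_two_add_inv_two, inv_one]⟩)
  exact this

lemma cont_memℒp (f : ℝ → ℂ) (hf : Continuous f) (a b : ℝ) :
    MemLp f 2 (volume.restrict (Ioc a b)) := by
  have : IsFiniteMeasure (volume.restrict (Ioc a b)) := by
    constructor
    rw [Measure.restrict_apply_univ, Real.volume_Ioc]
    exact ENNReal.ofReal_lt_top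
  obtain ⟨C, hC⟩ := (isCompact_Icc (a := a) (b := b)).exists_bound_of_continuousOn hf.continuousOn
  apply (memLp_top_of_bound hf.aestronglyMeasurable C ?_).mono_exponent le_top
  filter_upwards [ae_restrict_mem measurableSet_Ioc] with x hx
  exact hC x (Ioc_subset_Icc_self hx)

/-- If `{sin(ρₙ t)}_{n>p}` is a Riesz basis (complete plus two-sided ℓ² inequality)
in `L₂(0,2π)`, then `{ξₙ}_{n>p}`, `ξₙ = (cos(ρₙπ)sin(ρₙt), −sin(ρₙπ)cos(ρₙt))`,
is a Riesz basis in `𝒳 = L₂(0,π) ⊕ L₂(0,π)`. -/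
theorem xi_riesz_basis (p : ℕ) (ρ : ℕ → ℂ)
    -- completeness of {sin(ρₙ t)}_{n>p} in L₂(0,2π)
    (hcomp : ∀ h : ℝ → ℂ, MemLp h 2 (volume.restrict (Ioc (0:ℝ) (2 * Real.pi))) →
      (∀ n, p < n →
        ∫ t in Ioc (0:ℝ) (2 * Real.pi),
          h t * (starRingEnd ℂ) (Complex.sin (ρ n * (t : ℂ))) = 0) →
      h =ᵐ[volume.restrict (Ioc (0:ℝ) (2 * Real.pi))] 0)
    -- two-sided Riesz inequality for {sin(ρₙ t)}_{n>p} in L₂(0,2π)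
    (hineq : ∃ M₁ M₂ : ℝ, 0 < M₁ ∧ 0 < M₂ ∧
      ∀ s : Finset ℕ, (∀ n ∈ s, p < n) → ∀ b : ℕ → ℂ,
        M₁ * ∑ n ∈ s, ‖b n‖ ^ 2 ≤
          (∫ t in Ioc (0:ℝ) (2 * Real.pi),
            ‖∑ n ∈ s, b n * Complex.sin (ρ n * (t : ℂ))‖ ^ 2) ∧
        (∫ t in Ioc (0:ℝ) (2 * Real.pi),
            ‖∑ n ∈ s, b n * Complex.sin (ρ n * (t : ℂ))‖ ^ 2) ≤
          M₂ * ∑ n ∈ s, ‖b n‖ ^ 2) :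
    -- conclusion: {ξₙ}_{n>p} is a Riesz basis in 𝒳 = L₂(0,π) ⊕ L₂(0,π):
    -- (completeness)
    (∀ H₁ H₂ : ℝ → ℂ, MemLp H₁ 2 (volume.restrict (Ioc (0:ℝ) Real.pi)) →
      MemLp H₂ 2 (volume.restrict (Ioc (0:ℝ) Real.pi)) →
      (∀ n, p < n →
        ∫ t in Ioc (0:ℝ) Real.pi,
          (H₁ t * (starRingEnd ℂ) (xi1 (ρ n) t) +
            H₂ t * (starRingEnd ℂ) (xi2 (ρ n) t)) = 0) →
      (H₁ =ᵐ[volume.restrict (Ioc (0:ℝ) Real.pi)] 0 ∧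
        H₂ =ᵐ[volume.restrict (Ioc (0:ℝ) Real.pi)] 0))
    -- (two-sided ℓ² inequality)
    ∧ (∃ M₁ M₂ : ℝ, 0 < M₁ ∧ 0 < M₂ ∧
      ∀ s : Finset ℕ, (∀ n ∈ s, p < n) → ∀ b : ℕ → ℂ,
        M₁ * ∑ n ∈ s, ‖b n‖ ^ 2 ≤
          ((∫ t in Ioc (0:ℝ) Real.pi, ‖∑ n ∈ s, b n * xi1 (ρ n) t‖ ^ 2) +
            ∫ t in Ioc (0:ℝ) Real.pi, ‖∑ n ∈ s, b n * xi2 (ρ n) t‖ ^ 2) ∧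
        ((∫ t in Ioc (0:ℝ) Real.pi, ‖∑ n ∈ s, b n * xi1 (ρ n) t‖ ^ 2) +
            ∫ t in Ioc (0:ℝ) Real.pi, ‖∑ n ∈ s, b n * xi2 (ρ n) t‖ ^ 2) ≤
          M₂ * ∑ n ∈ s, ‖b n‖ ^ 2) := by
  refine ⟨?_, ?_⟩
  · intro H₁ H₂ hH₁ hH₂ hξ
    have hπ : (0:ℝ) < Real.pi := Real.pi_pos
    -- the two auxiliary functions on (0, π)
    set A : ℝ → ℂ := fun x => (-(1:ℂ)/2) * (H₁ x + H₂ x) with hA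
    set B : ℝ → ℂ := fun x => ((1:ℂ)/2) * (H₁ x - H₂ x) with hB
    have hAm : MemLp A 2 (volume.restrict (Ioc (0:ℝ) Real.pi)) := (hH₁.add hH₂).const_mul _
    have hBm : MemLp B 2 (volume.restrict (Ioc (0:ℝ) Real.pi)) := (hH₁.sub hH₂).const_mul _
    -- the glued function on (0, 2π)
    set h : ℝ → ℂ := fun u =>
      if u ≤ Real.pi then A (Real.pi - u) else B (u - Real.pi) with hh
    -- measure decomposition
    have hsplit : volume.restrict (Ioc (0:ℝ) (2 * Real.pi)) =
        volume.restrict (Ioc (0:ℝ) Real.pi) + volume.restrict (Ioc Real.pi (2 * Real.pi)) := by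
      rw [← Measure.restrict_union (Set.Ioc_disjoint_Ioc_of_le le_rfl) measurableSet_Ioc,
        Set.Ioc_union_Ioc_eq_Ioc hπ.le (by linarith)]
    -- measure-preserving maps
    have mp1 : MeasurePreserving (fun t : ℝ => Real.pi - t)
        (volume.restrict (Ico (0:ℝ) Real.pi)) (volume.restrict (Ioc (0:ℝ) Real.pi)) := by
      have h0 : MeasurePreserving (fun t : ℝ => Real.pi - t) volume volume :=
        Measure.measurePreserving_sub_left volume Real.pi
      have := h0.restrict_preimage (s := Ioc (0:ℝ) Real.pi) measurableSet_Ioc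
      have hpre : (fun t : ℝ => Real.pi - t) ⁻¹' Ioc (0:ℝ) Real.pi = Ico (0:ℝ) Real.pi := by
        ext x
        simp only [Set.mem_preimage, Set.mem_Ioc, Set.mem_Ico]
        constructor <;> intro ⟨u, v⟩ <;> constructor <;> linarith
      rwa [hpre] at this
    have mp2 : MeasurePreserving (fun t : ℝ => t - Real.pi)
        (volume.restrict (Ioc Real.pi (2 * Real.pi))) (volume.restrict (Ioc (0:ℝ) Real.pi)) := by
      have h0 : MeasurePreserving (fun t : ℝ => t - Real.pi) volume volume :=
        measurePreserving_sub_right volume Real.pi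
      have := h0.restrict_preimage (s := Ioc (0:ℝ) Real.pi) measurableSet_Ioc
      have hpre : (fun t : ℝ => t - Real.pi) ⁻¹' Ioc (0:ℝ) Real.pi = Ioc Real.pi (2 * Real.pi) := by
        ext x
        simp only [Set.mem_preimage, Set.mem_Ioc]
        constructor <;> intro ⟨u, v⟩ <;> constructor <;> linarith
      rwa [hpre] at this
    have mp3 : MeasurePreserving (fun t : ℝ => t + Real.pi)
        (volume.restrict (Ioc (0:ℝ) Real.pi)) (volume.restrict (Ioc Real.pi (2 * Real.pi))) := by
      have h0 : MeasurePreserving (fun t : ℝ => t + Real.pi) volume volume :=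
        measurePreserving_add_right volume Real.pi
      have := h0.restrict_preimage (s := Ioc Real.pi (2 * Real.pi)) measurableSet_Ioc
      have hpre : (fun t : ℝ => t + Real.pi) ⁻¹' Ioc Real.pi (2 * Real.pi) = Ioc (0:ℝ) Real.pi := by
        ext x
        simp only [Set.mem_preimage, Set.mem_Ioc]
        constructor <;> intro ⟨u, v⟩ <;> constructor <;> linarith
      rwa [hpre] at this
    -- h agrees with the composed functions on the two pieces
    have hae1 : h =ᵐ[volume.restrict (Ioc (0:ℝ) Real.pi)] (A ∘ fun u => Real.pi - u) := by
      filter_upwards [ae_restrict_mem measurableSet_Ioc] with u hu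
      simp only [hh, Function.comp]
      rw [if_pos hu.2]
    have hae2 : h =ᵐ[volume.restrict (Ioc Real.pi (2 * Real.pi))] (B ∘ fun u => u - Real.pi) := by
      filter_upwards [ae_restrict_mem measurableSet_Ioc] with u hu
      simp only [hh, Function.comp]
      rw [if_neg (not_le.2 hu.1)]
    -- h ∈ L²(0,2π)
    have hm1 : MemLp h 2 (volume.restrict (Ioc (0:ℝ) Real.pi)) := by
      rw [memLp_congr_ae hae1]
      have := hAm.comp_measurePreserving mp1
      rwa [restrict_Ico_eq_restrict_Ioc] at this
    have hm2 : MemLp h 2 (volume.restrict (Ioc Real.pi (2 * Real.pi))) := by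
      rw [memLp_congr_ae hae2]
      exact hBm.comp_measurePreserving mp2
    have hmem : MemLp h 2 (volume.restrict (Ioc (0:ℝ) (2 * Real.pi))) := by
      rw [hsplit]; exact memℒp_two_add_measure hm1 hm2
    -- orthogonality of h to the sines
    have horth : ∀ n, p < n →
        ∫ t in Ioc (0:ℝ) (2 * Real.pi),
          h t * (starRingEnd ℂ) (Complex.sin (ρ n * (t : ℂ))) = 0 := by
      intro n hn
      set c : ℝ → ℂ := fun u => (starRingEnd ℂ) (Complex.sin (ρ n * (u : ℂ))) with hc
      have hcc : Continuous c := by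
        apply Complex.continuous_conj.comp
        exact Complex.continuous_sin.comp (continuous_const.mul Complex.continuous_ofReal)
      have hint1 : Integrable (fun u => h u * c u) (volume.restrict (Ioc (0:ℝ) Real.pi)) :=
        memℒp_mul_integrable hm1 (cont_memℒp c hcc _ _)
      have hint2 : Integrable (fun u => h u * c u) (volume.restrict (Ioc Real.pi (2 * Real.pi))) :=
        memℒp_mul_integrable hm2 (cont_memℒp c hcc _ _)
      have e0 : (∫ t in Ioc (0:ℝ) (2 * Real.pi), h t * c t) =
          (∫ t in Ioc (0:ℝ) Real.pi, h t * c t)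
            + ∫ t in Ioc Real.pi (2 * Real.pi), h t * c t := by
        rw [show (∫ t in Ioc (0:ℝ) (2 * Real.pi), h t * c t)
            = ∫ t, h t * c t ∂(volume.restrict (Ioc (0:ℝ) (2 * Real.pi))) from rfl, hsplit]
        exact integral_add_measure hint1 hint2
      -- first piece
      have e1 : (∫ t in Ioc (0:ℝ) Real.pi, h t * c t)
          = ∫ t in Ioc (0:ℝ) Real.pi, A t * c (Real.pi - t) := by
        rw [integral_congr_ae (f := fun u => h u * c u) (g := fun u => (A ∘ fun u => Real.pi - u) u * c u)
            (hae1.mul (Filter.EventuallyEq.refl _ c)),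
          ← intervalIntegral.integral_of_le hπ.le, ← intervalIntegral.integral_of_le hπ.le]
        have : (fun u => (A ∘ fun u => Real.pi - u) u * c u)
            = fun u => (fun t => A t * c (Real.pi - t)) (Real.pi - u) := by
          funext u; simp [sub_sub_cancel]
        rw [this, intervalIntegral.integral_comp_sub_left (fun t => A t * c (Real.pi - t)) Real.pi]
        norm_num
      -- second piece
      have e2 : (∫ t in Ioc Real.pi (2 * Real.pi), h t * c t)
          = ∫ t in Ioc (0:ℝ) Real.pi, B t * c (Real.pi + t) := by
        rw [integral_congr_ae (f := fun u => h u * c u) (g := fun u => (B ∘ fun u => u - Real.pi) u * c u)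
            (hae2.mul (Filter.EventuallyEq.refl _ c)),
          ← intervalIntegral.integral_of_le (by linarith : Real.pi ≤ 2 * Real.pi),
          ← intervalIntegral.integral_of_le hπ.le]
        have : (fun u => (B ∘ fun u => u - Real.pi) u * c u)
            = fun u => (fun t => B t * c (Real.pi + t)) (u - Real.pi) := by
          funext u; simp [add_sub_cancel]
        rw [this, intervalIntegral.integral_comp_sub_right (fun t => B t * c (Real.pi + t)) Real.pi]
        norm_num [two_mul]
      rw [e0, e1, e2]
      have hintA : Integrable (fun t => A t * c (Real.pi - t))
          (volume.restrict (Ioc (0:ℝ) Real.pi)) :=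
        memℒp_mul_integrable hAm (cont_memℒp _ (hcc.comp (continuous_const.sub continuous_id)) _ _)
      have hintB : Integrable (fun t => B t * c (Real.pi + t))
          (volume.restrict (Ioc (0:ℝ) Real.pi)) :=
        memℒp_mul_integrable hBm (cont_memℒp _ (hcc.comp (continuous_const.add continuous_id)) _ _)
      rw [← integral_add hintA hintB]
      have hpt : ∀ t : ℝ, A t * c (Real.pi - t) + B t * c (Real.pi + t)
          = H₁ t * (starRingEnd ℂ) (xi1 (ρ n) t) + H₂ t * (starRingEnd ℂ) (xi2 (ρ n) t) := by
        intro t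
        simp only [hA, hB, hc, xi1_eq, xi2_eq, map_div₀, map_sub, map_add, map_neg, map_ofNat]
        ring
      calc (∫ t in Ioc (0:ℝ) Real.pi, (A t * c (Real.pi - t) + B t * c (Real.pi + t)))
          = ∫ t in Ioc (0:ℝ) Real.pi,
              (H₁ t * (starRingEnd ℂ) (xi1 (ρ n) t) + H₂ t * (starRingEnd ℂ) (xi2 (ρ n) t)) := by
            exact integral_congr_ae (Filter.Eventually.of_forall fun t => hpt t)
        _ = 0 := hξ n hn
    -- conclude h = 0 a.e., then pull back
    have hzero := hcomp h hmem horth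
    rw [hsplit, Filter.EventuallyEq, ae_add_measure_iff] at hzero
    obtain ⟨hz1, hz2⟩ := hzero
    -- pull back to A and B
    have hcomp1 : (h ∘ fun x : ℝ => Real.pi - x) =ᵐ[volume.restrict (Ico (0:ℝ) Real.pi)] 0 := by
      have := ae_eq_comp (g := h) (g' := (0 : ℝ → ℂ)) mp1.aemeasurable (by rwa [mp1.map_eq])
      simpa [Function.comp] using this
    have hcomp2 : (h ∘ fun x : ℝ => x + Real.pi) =ᵐ[volume.restrict (Ioc (0:ℝ) Real.pi)] 0 := by
      have := ae_eq_comp (g := h) (g' := (0 : ℝ → ℂ)) mp3.aemeasurable (by rwa [mp3.map_eq])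
      simpa [Function.comp] using this
    have hA0 : A =ᵐ[volume.restrict (Ioc (0:ℝ) Real.pi)] 0 := by
      rw [← restrict_Ico_eq_restrict_Ioc]
      filter_upwards [hcomp1, ae_restrict_mem measurableSet_Ico] with x hx hxm
      have hx' : h (Real.pi - x) = A x := by
        simp only [hh]
        rw [if_pos (by linarith [hxm.1] : Real.pi - x ≤ Real.pi), sub_sub_cancel]
      simp only [Function.comp] at hx
      rw [← hx']
      exact hx
    have hB0 : B =ᵐ[volume.restrict (Ioc (0:ℝ) Real.pi)] 0 := by
      filter_upwards [hcomp2, ae_restrict_mem measurableSet_Ioc] with x hx hxm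
      have hx' : h (x + Real.pi) = B x := by
        simp only [hh]
        rw [if_neg (by intro hcon; linarith [hxm.1]), add_sub_cancel_right]
      simp only [Function.comp] at hx
      rw [← hx']
      exact hx
    constructor
    · filter_upwards [hA0, hB0] with x h1 h2
      simp only [hA, hB, Pi.zero_apply] at h1 h2 ⊢
      linear_combination -h1 + h2
    · filter_upwards [hA0, hB0] with x h1 h2
      simp only [hA, hB, Pi.zero_apply] at h1 h2 ⊢
      linear_combination -h1 - h2
  · obtain ⟨M₁, M₂, hM₁, hM₂, hb⟩ := hineq
    refine ⟨M₁ / 2, M₂ / 2, by positivity, by positivity, fun s hs b => ?_⟩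
    have hFc : Continuous fun u : ℝ => ∑ n ∈ s, b n * Complex.sin (ρ n * (u : ℂ)) :=
      continuous_finset_sum _ fun n _ => continuous_const.mul
        (Complex.continuous_sin.comp (continuous_const.mul Complex.continuous_ofReal))
    have key := integral_split _ hFc
    simp only [sum_xi1, sum_xi2]
    obtain ⟨h1, h2⟩ := hb s hs b
    constructor
    · rw [key]; linarith
    · rw [key]; linarith
end

section
/- If the system {sin(ρₙ t)}_{n>p} is complete in L₂(0,2π), then the system {ξₙ}_{n>p} with ξₙ(t) = (cos(ρₙπ)·sin(ρₙ t), −sin(ρₙπ)·cos(ρₙ t)) is complete in L₂(0,π) ⊕ L₂(0,π). -/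
open MeasureTheory Set

lemma finite_restrict_Ioc (a b : ℝ) : IsFiniteMeasure (volume.restrict (Ioc a b)) := by
  constructor
  rw [Measure.restrict_apply_univ, Real.volume_Ioc]
  exact ENNReal.ofReal_lt_top

lemma integrable_mul_cont {a b : ℝ} {f : ℝ → ℂ}
    (hf : MemLp f 2 (volume.restrict (Ioc a b))) {φ : ℝ → ℂ} (hφ : Continuous φ) :
    Integrable (fun s => f s * φ s) (volume.restrict (Ioc a b)) := by
  haveI := finite_restrict_Ioc a b
  have hfi : Integrable f (volume.restrict (Ioc a b)) :=
    memLp_one_iff_integrable.mp (hf.mono_exponent one_le_two)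
  obtain ⟨C, hC⟩ := (isCompact_Icc (a := a) (b := b)).exists_bound_of_continuousOn hφ.continuousOn
  have hb : ∀ᵐ x ∂volume.restrict (Ioc a b), ‖φ x‖ ≤ C := by
    refine (ae_restrict_iff' measurableSet_Ioc).mpr (Filter.Eventually.of_forall fun x hx => ?_)
    exact hC x (Ioc_subset_Icc_self hx)
  have := hfi.bdd_mul (hφ.aestronglyMeasurable.restrict) hb
  simpa [mul_comm] using this

lemma mp_refl : MeasurePreserving (fun s : ℝ => Real.pi - s)
    (volume.restrict (Ioc 0 Real.pi)) (volume.restrict (Ico 0 Real.pi)) := by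
  have h := (Measure.measurePreserving_sub_left (volume : Measure ℝ) Real.pi).restrict_preimage
      (s := Ico 0 Real.pi) measurableSet_Ico
  have e : (fun s : ℝ => Real.pi - s) ⁻¹' (Ico 0 Real.pi) = Ioc 0 Real.pi := by
    ext x
    simp only [mem_preimage, mem_Ico, mem_Ioc]
    constructor <;> (rintro ⟨h1, h2⟩; constructor <;> linarith)
  rwa [e] at h

lemma mp_trans : MeasurePreserving (fun s : ℝ => s - Real.pi)
    (volume.restrict (Ioc Real.pi (2 * Real.pi))) (volume.restrict (Ioc 0 Real.pi)) := by
  have h := (measurePreserving_sub_right (volume : Measure ℝ) Real.pi).restrict_preimage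
      (s := Ioc 0 Real.pi) measurableSet_Ioc
  have e : (fun s : ℝ => s - Real.pi) ⁻¹' (Ioc 0 Real.pi) = Ioc Real.pi (2 * Real.pi) := by
    ext x
    simp only [mem_preimage, mem_Ioc]
    constructor <;> (rintro ⟨h1, h2⟩; constructor <;> linarith)
  rwa [e] at h


/-- If the system `{sin(ρₙ t)}_{n>p}` is complete in `L₂(0,2π)`
(the only element orthogonal to all of them is zero), then the system
`{ξₙ}_{n>p}` with `ξₙ(t) = (cos(ρₙπ)sin(ρₙt), −sin(ρₙπ)cos(ρₙt))`
is complete in `𝒳 = L₂(0,π) ⊕ L₂(0,π)`. -/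
theorem xi_complete (p : ℕ) (ρ : ℕ → ℂ)
    (hcomp : ∀ h : ℝ → ℂ, MemLp h 2 (volume.restrict (Ioc (0:ℝ) (2 * Real.pi))) →
      (∀ n, p < n →
        ∫ t in Ioc (0:ℝ) (2 * Real.pi),
          h t * (starRingEnd ℂ) (Complex.sin (ρ n * (t : ℂ))) = 0) →
      h =ᵐ[volume.restrict (Ioc (0:ℝ) (2 * Real.pi))] 0) :
    ∀ H₁ H₂ : ℝ → ℂ, MemLp H₁ 2 (volume.restrict (Ioc (0:ℝ) Real.pi)) →
      MemLp H₂ 2 (volume.restrict (Ioc (0:ℝ) Real.pi)) →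
      (∀ n, p < n →
        ∫ t in Ioc (0:ℝ) Real.pi,
          (H₁ t * (starRingEnd ℂ) (xi1 (ρ n) t) +
            H₂ t * (starRingEnd ℂ) (xi2 (ρ n) t)) = 0) →
      (H₁ =ᵐ[volume.restrict (Ioc (0:ℝ) Real.pi)] 0 ∧
        H₂ =ᵐ[volume.restrict (Ioc (0:ℝ) Real.pi)] 0) := by
  intro H₁ H₂ hH₁ hH₂ hortho
  have hπ : (0:ℝ) < Real.pi := Real.pi_pos
  have hππ : Real.pi ≤ 2 * Real.pi := by linarith
  -- measurable representatives
  have hm₁ := hH₁.aestronglyMeasurable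
  have hm₂ := hH₂.aestronglyMeasurable
  set g₁ : ℝ → ℂ := hm₁.mk H₁ with hg₁def
  set g₂ : ℝ → ℂ := hm₂.mk H₂ with hg₂def
  have hg₁m : Measurable g₁ := hm₁.stronglyMeasurable_mk.measurable
  have hg₂m : Measurable g₂ := hm₂.stronglyMeasurable_mk.measurable
  have hg₁e : H₁ =ᵐ[volume.restrict (Ioc (0:ℝ) Real.pi)] g₁ := hm₁.ae_eq_mk
  have hg₂e : H₂ =ᵐ[volume.restrict (Ioc (0:ℝ) Real.pi)] g₂ := hm₂.ae_eq_mk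
  have hg₁L : MemLp g₁ 2 (volume.restrict (Ioc (0:ℝ) Real.pi)) := hH₁.ae_eq hg₁e
  have hg₂L : MemLp g₂ 2 (volume.restrict (Ioc (0:ℝ) Real.pi)) := hH₂.ae_eq hg₂e
  -- the pieces and the glued function
  set a : ℝ → ℂ := fun s => -(g₁ (Real.pi - s) + g₂ (Real.pi - s)) / 2 with ha_def
  set b : ℝ → ℂ := fun s => (g₁ (s - Real.pi) - g₂ (s - Real.pi)) / 2 with hb_def
  set h : ℝ → ℂ := fun s =>
    (Ioc (0:ℝ) Real.pi).indicator a s + (Ioc Real.pi (2 * Real.pi)).indicator b s with hh_def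
  -- MemLp facts
  have hsumL : MemLp (fun t => -(g₁ t + g₂ t) / 2) 2 (volume.restrict (Ioc (0:ℝ) Real.pi)) := by
    have := ((hg₁L.add hg₂L).neg).const_mul (2⁻¹ : ℂ)
    refine this.ae_eq (Filter.Eventually.of_forall fun t => ?_)
    field_simp
    rfl
  have hdiffL : MemLp (fun t => (g₁ t - g₂ t) / 2) 2 (volume.restrict (Ioc (0:ℝ) Real.pi)) := by
    have := (hg₁L.sub hg₂L).const_mul (2⁻¹ : ℂ)
    refine this.ae_eq (Filter.Eventually.of_forall fun t => ?_)
    field_simp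
    rfl
  have hsumL' : MemLp (fun t => -(g₁ t + g₂ t) / 2) 2 (volume.restrict (Ico (0:ℝ) Real.pi)) := by
    rwa [Measure.restrict_congr_set Ico_ae_eq_Ioc]
  have haL : MemLp a 2 (volume.restrict (Ioc (0:ℝ) Real.pi)) :=
    hsumL'.comp_measurePreserving mp_refl
  have hbL : MemLp b 2 (volume.restrict (Ioc Real.pi (2 * Real.pi))) :=
    hdiffL.comp_measurePreserving mp_trans
  have hIoc1 : Ioc (0:ℝ) Real.pi ∩ Ioc 0 (2 * Real.pi) = Ioc 0 Real.pi :=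
    inter_eq_left.mpr (Ioc_subset_Ioc_right hππ)
  have hIoc2 : Ioc Real.pi (2 * Real.pi) ∩ Ioc 0 (2 * Real.pi) = Ioc Real.pi (2 * Real.pi) :=
    inter_eq_left.mpr (Ioc_subset_Ioc_left hπ.le)
  have hIoc1' : Ioc (0:ℝ) (2 * Real.pi) ∩ Ioc 0 Real.pi = Ioc 0 Real.pi := by
    rw [inter_comm]; exact hIoc1
  have hIoc2' : Ioc (0:ℝ) (2 * Real.pi) ∩ Ioc Real.pi (2 * Real.pi) = Ioc Real.pi (2 * Real.pi) := by
    rw [inter_comm]; exact hIoc2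
  have hind₁ : MemLp ((Ioc (0:ℝ) Real.pi).indicator a) 2
      (volume.restrict (Ioc (0:ℝ) (2 * Real.pi))) := by
    rw [memLp_indicator_iff_restrict measurableSet_Ioc,
      Measure.restrict_restrict measurableSet_Ioc, hIoc1]
    exact haL
  have hind₂ : MemLp ((Ioc Real.pi (2 * Real.pi)).indicator b) 2
      (volume.restrict (Ioc (0:ℝ) (2 * Real.pi))) := by
    rw [memLp_indicator_iff_restrict measurableSet_Ioc,
      Measure.restrict_restrict measurableSet_Ioc, hIoc2]
    exact hbL
  have hhL : MemLp h 2 (volume.restrict (Ioc (0:ℝ) (2 * Real.pi))) := hind₁.add hind₂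
  -- orthogonality of h to all sin(ρₙ ·)
  have key : ∀ n, p < n →
      ∫ s in Ioc (0:ℝ) (2 * Real.pi),
        h s * (starRingEnd ℂ) (Complex.sin (ρ n * (s : ℂ))) = 0 := by
    intro n hn
    set C : ℝ → ℂ := fun s => (starRingEnd ℂ) (Complex.sin (ρ n * (s : ℂ))) with hC_def
    have hCc : Continuous C := by
      apply Complex.continuous_conj.comp
      exact Complex.continuous_sin.comp (continuous_const.mul Complex.continuous_ofReal)
    set F : ℝ → ℂ := fun t =>
      -(g₁ t + g₂ t) / 2 * (starRingEnd ℂ) (Complex.sin (ρ n * ((Real.pi - t : ℝ) : ℂ))) with hF_def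
    set G : ℝ → ℂ := fun t =>
      (g₁ t - g₂ t) / 2 * (starRingEnd ℂ) (Complex.sin (ρ n * ((t + Real.pi : ℝ) : ℂ))) with hG_def
    have hCF : Continuous fun t : ℝ => (starRingEnd ℂ) (Complex.sin (ρ n * ((Real.pi - t : ℝ) : ℂ))) := by
      apply Complex.continuous_conj.comp
      exact Complex.continuous_sin.comp (continuous_const.mul
        (Complex.continuous_ofReal.comp (continuous_const.sub continuous_id)))
    have hCG : Continuous fun t : ℝ => (starRingEnd ℂ) (Complex.sin (ρ n * ((t + Real.pi : ℝ) : ℂ))) := by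
      apply Complex.continuous_conj.comp
      exact Complex.continuous_sin.comp (continuous_const.mul
        (Complex.continuous_ofReal.comp (continuous_id.add continuous_const)))
    have haC : Integrable (fun s => a s * C s) (volume.restrict (Ioc (0:ℝ) Real.pi)) :=
      integrable_mul_cont haL hCc
    have hbC : Integrable (fun s => b s * C s) (volume.restrict (Ioc Real.pi (2 * Real.pi))) :=
      integrable_mul_cont hbL hCc
    have hFint : Integrable F (volume.restrict (Ioc (0:ℝ) Real.pi)) :=
      integrable_mul_cont hsumL hCF
    have hGint : Integrable G (volume.restrict (Ioc (0:ℝ) Real.pi)) :=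
      integrable_mul_cont hdiffL hCG
    -- split the integral into the two pieces
    have hsplit : ∫ s in Ioc (0:ℝ) (2 * Real.pi), h s * C s
        = (∫ s in Ioc (0:ℝ) Real.pi, a s * C s)
          + ∫ s in Ioc Real.pi (2 * Real.pi), b s * C s := by
      have e : (fun s => h s * C s)
          = fun s => (Ioc (0:ℝ) Real.pi).indicator (fun s => a s * C s) s
            + (Ioc Real.pi (2 * Real.pi)).indicator (fun s => b s * C s) s := by
        funext s
        simp only [hh_def, Set.indicator_apply]
        split_ifs <;> ring
      rw [e, integral_add, setIntegral_indicator measurableSet_Ioc,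
        setIntegral_indicator measurableSet_Ioc, hIoc1', hIoc2']
      · rw [integrable_indicator_iff measurableSet_Ioc]
        unfold IntegrableOn
        rw [Measure.restrict_restrict measurableSet_Ioc, hIoc1]
        exact haC
      · rw [integrable_indicator_iff measurableSet_Ioc]
        unfold IntegrableOn
        rw [Measure.restrict_restrict measurableSet_Ioc, hIoc2]
        exact hbC
    -- substitution s ↦ π - s
    have hsub₁ : ∫ s in Ioc (0:ℝ) Real.pi, a s * C s = ∫ t in Ioc (0:ℝ) Real.pi, F t := by
      rw [← intervalIntegral.integral_of_le hπ.le, ← intervalIntegral.integral_of_le hπ.le]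
      have e : ∀ s : ℝ, a s * C s = F (Real.pi - s) := by
        intro s
        simp only [ha_def, hC_def, hF_def]
        rw [show Real.pi - (Real.pi - s) = s by ring]
      calc (∫ s in (0:ℝ)..Real.pi, a s * C s)
          = ∫ s in (0:ℝ)..Real.pi, F (Real.pi - s) := by
            exact intervalIntegral.integral_congr fun s _ => e s
        _ = ∫ t in (Real.pi - Real.pi)..(Real.pi - 0), F t :=
            intervalIntegral.integral_comp_sub_left F Real.pi
        _ = ∫ t in (0:ℝ)..Real.pi, F t := by norm_num
    -- substitution s ↦ s - π
    have hsub₂ : ∫ s in Ioc Real.pi (2 * Real.pi), b s * C s = ∫ t in Ioc (0:ℝ) Real.pi, G t := by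
      rw [← intervalIntegral.integral_of_le hππ, ← intervalIntegral.integral_of_le hπ.le]
      have e : ∀ s : ℝ, b s * C s = G (s - Real.pi) := by
        intro s
        simp only [hb_def, hC_def, hG_def]
        rw [show s - Real.pi + Real.pi = s by ring]
      calc (∫ s in Real.pi..(2 * Real.pi), b s * C s)
          = ∫ s in Real.pi..(2 * Real.pi), G (s - Real.pi) := by
            exact intervalIntegral.integral_congr fun s _ => e s
        _ = ∫ t in (Real.pi - Real.pi)..(2 * Real.pi - Real.pi), G t :=
            intervalIntegral.integral_comp_sub_right G Real.pi
        _ = ∫ t in (0:ℝ)..Real.pi, G t := by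
            rw [show 2 * Real.pi - Real.pi = Real.pi from by ring, sub_self]
    -- pointwise trig identity
    have hptw : ∀ t : ℝ, F t + G t
        = g₁ t * (starRingEnd ℂ) (xi1 (ρ n) t) + g₂ t * (starRingEnd ℂ) (xi2 (ρ n) t) := by
      intro t
      simp only [hF_def, hG_def, xi1, xi2]
      push_cast
      rw [mul_sub, mul_add, Complex.sin_sub, Complex.sin_add]
      simp only [map_mul, map_add, map_sub, map_neg]
      ring
    have htarget : ∫ t in Ioc (0:ℝ) Real.pi,
        (g₁ t * (starRingEnd ℂ) (xi1 (ρ n) t) + g₂ t * (starRingEnd ℂ) (xi2 (ρ n) t)) = 0 := by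
      rw [← hortho n hn]
      refine integral_congr_ae ?_
      filter_upwards [hg₁e, hg₂e] with t e1 e2
      rw [e1, e2]
    have hFG : (∫ t in Ioc (0:ℝ) Real.pi, F t) + ∫ t in Ioc (0:ℝ) Real.pi, G t = 0 := by
      rw [← integral_add hFint hGint]
      rw [← htarget]
      exact integral_congr_ae (Filter.Eventually.of_forall fun t => hptw t)
    calc ∫ s in Ioc (0:ℝ) (2 * Real.pi), h s * C s
        = (∫ s in Ioc (0:ℝ) Real.pi, a s * C s)
          + ∫ s in Ioc Real.pi (2 * Real.pi), b s * C s := hsplit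
      _ = (∫ t in Ioc (0:ℝ) Real.pi, F t) + ∫ t in Ioc (0:ℝ) Real.pi, G t := by
          rw [hsub₁, hsub₂]
      _ = 0 := hFG
  have h0 : h =ᵐ[volume.restrict (Ioc (0:ℝ) (2 * Real.pi))] 0 := hcomp h hhL key
  -- extract the two pieces
  have h0a : ∀ᵐ s ∂volume.restrict (Ioc (0:ℝ) Real.pi), a s = 0 := by
    have hsub : ∀ᵐ s ∂volume.restrict (Ioc (0:ℝ) Real.pi), h s = (0:ℝ → ℂ) s :=
      ae_restrict_of_ae_restrict_of_subset (Ioc_subset_Ioc_right hππ) h0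
    have hmem : ∀ᵐ s ∂volume.restrict (Ioc (0:ℝ) Real.pi), s ∈ Ioc (0:ℝ) Real.pi :=
      ae_restrict_mem measurableSet_Ioc
    filter_upwards [hsub, hmem] with s hs hsm
    have h2 : s ∉ Ioc Real.pi (2 * Real.pi) := fun hc => absurd hsm.2 (not_le.mpr hc.1)
    simpa [hh_def, Set.indicator_of_mem hsm, Set.indicator_of_notMem h2] using hs
  have h0b : ∀ᵐ s ∂volume.restrict (Ioc Real.pi (2 * Real.pi)), b s = 0 := by
    have hsub : ∀ᵐ s ∂volume.restrict (Ioc Real.pi (2 * Real.pi)), h s = (0:ℝ → ℂ) s :=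
      ae_restrict_of_ae_restrict_of_subset (Ioc_subset_Ioc_left hπ.le) h0
    have hmem : ∀ᵐ s ∂volume.restrict (Ioc Real.pi (2 * Real.pi)), s ∈ Ioc Real.pi (2 * Real.pi) :=
      ae_restrict_mem measurableSet_Ioc
    filter_upwards [hsub, hmem] with s hs hsm
    have h1 : s ∉ Ioc (0:ℝ) Real.pi := fun hc => absurd hc.2 (not_le.mpr hsm.1)
    simpa [hh_def, Set.indicator_of_mem hsm, Set.indicator_of_notMem h1] using hs
  -- transfer along the measure-preserving maps
  have hS₁ : MeasurableSet {t : ℝ | -(g₁ t + g₂ t) / 2 = 0} := by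
    have : Measurable fun t => -(g₁ t + g₂ t) / 2 := ((hg₁m.add hg₂m).neg).div_const 2
    exact this (measurableSet_singleton 0)
  have hS₂ : MeasurableSet {t : ℝ | (g₁ t - g₂ t) / 2 = 0} := by
    have : Measurable fun t => (g₁ t - g₂ t) / 2 := (hg₁m.sub hg₂m).div_const 2
    exact this (measurableSet_singleton 0)
  have t1 : ∀ᵐ t ∂volume.restrict (Ioc (0:ℝ) Real.pi), -(g₁ t + g₂ t) / 2 = 0 := by
    have step : ∀ᵐ t ∂volume.restrict (Ico (0:ℝ) Real.pi),
        t ∈ {t : ℝ | -(g₁ t + g₂ t) / 2 = 0} := by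
      rw [← mp_refl.map_eq]
      refine (ae_map_iff mp_refl.measurable.aemeasurable hS₁).mpr ?_
      filter_upwards [h0a] with s hs
      exact hs
    rwa [Measure.restrict_congr_set Ico_ae_eq_Ioc] at step
  have t2 : ∀ᵐ t ∂volume.restrict (Ioc (0:ℝ) Real.pi), (g₁ t - g₂ t) / 2 = 0 := by
    have step : ∀ᵐ t ∂volume.restrict (Ioc (0:ℝ) Real.pi),
        t ∈ {t : ℝ | (g₁ t - g₂ t) / 2 = 0} := by
      rw [← mp_trans.map_eq]
      refine (ae_map_iff mp_trans.measurable.aemeasurable hS₂).mpr ?_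
      filter_upwards [h0b] with s hs
      exact hs
    exact step
  have keyeq : ∀ t : ℝ, -(g₁ t + g₂ t) / 2 = 0 → (g₁ t - g₂ t) / 2 = 0 →
      g₁ t = 0 ∧ g₂ t = 0 := by
    intro t e1 e2
    constructor
    · linear_combination -e1 + e2
    · linear_combination -e1 - e2
  constructor
  · filter_upwards [t1, t2, hg₁e] with t e1 e2 e3
    rw [Pi.zero_apply, e3]
    exact (keyeq t e1 e2).1
  · filter_upwards [t1, t2, hg₂e] with t e1 e2 e3
    rw [Pi.zero_apply, e3]
    exact (keyeq t e1 e2).2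
end

section
/- Let H be a Hilbert space, {ṽₙ} with {ṽₙ/‖ṽₙ‖} a Riesz basis of H, ũ ∈ H with (ũ, ṽₙ) = w̃ₙ, and let {vₙ}, {wₙ} satisfy Z = (Σ ‖ṽₙ/‖ṽₙ‖ − vₙ/‖vₙ‖‖²)^{1/2} and T = (Σ |w̃ₙ/‖ṽₙ‖ − wₙ/‖vₙ‖|²)^{1/2}, with Z sufficiently small. Then there exists a unique u ∈ H with (u, vₙ) = wₙ for all n, and ‖u − ũ‖ ≤ C(Z + T) where C depends only on {ṽₙ} and ũ. -/
open Finset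
open scoped ENNReal NNReal ComplexConjugate

variable {H : Type*} [NormedAddCommGroup H] [InnerProductSpace ℂ H] [CompleteSpace H]

/-- A Riesz basis: a complete family satisfying the two-sided ℓ² inequality
for all finite linear combinations. -/
def IsRieszBasis (f : ℕ → H) : Prop :=
  (∀ x : H, (∀ n, (inner ℂ x (f n) : ℂ) = 0) → x = 0) ∧
  ∃ M₁ M₂ : ℝ, 0 < M₁ ∧ 0 < M₂ ∧ ∀ (s : Finset ℕ) (b : ℕ → ℂ),
    M₁ * ∑ n ∈ s, ‖b n‖ ^ 2 ≤ ‖∑ n ∈ s, b n • f n‖ ^ 2 ∧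
    ‖∑ n ∈ s, b n • f n‖ ^ 2 ≤ M₂ * ∑ n ∈ s, ‖b n‖ ^ 2

/-- The normalization `x/‖x‖` of a vector. -/
noncomputable def nrml (x : H) : H := ((‖x‖⁻¹ : ℝ) : ℂ) • x

namespace MomentAux


noncomputable abbrev L2 : Type := lp (fun _ : ℕ => ℂ) 2

lemma rpow_toReal (x : ℝ) (hx : 0 ≤ x) : x ^ ((2:ℝ≥0∞)).toReal = x ^ 2 := by
  rw [show ((2:ℝ≥0∞)).toReal = ((2:ℕ):ℝ) by norm_num, Real.rpow_natCast]

lemma memL2 {a : ℕ → ℂ} (h : Summable fun n => ‖a n‖ ^ 2) : Memℓp a 2 := by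
  apply memℓp_gen
  have : (fun n => ‖a n‖ ^ ((2:ℝ≥0∞)).toReal) = fun n => ‖a n‖ ^ 2 :=
    funext fun n => rpow_toReal _ (norm_nonneg _)
  rw [this]; exact h

noncomputable def toL2 (a : ℕ → ℂ) (h : Summable fun n => ‖a n‖ ^ 2) : L2 := ⟨a, memL2 h⟩

@[simp] lemma toL2_apply (a : ℕ → ℂ) (h) (n : ℕ) : (toL2 a h : ∀ _ : ℕ, ℂ) n = a n := rfl

lemma summable_sq (f : L2) : Summable fun n => ‖f n‖ ^ 2 := by
  have := lp.memℓp f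
  rw [memℓp_gen_iff (by norm_num : (0:ℝ) < ((2:ℝ≥0∞)).toReal)] at this
  have e : (fun n => ‖f n‖ ^ ((2:ℝ≥0∞)).toReal) = fun n => ‖f n‖ ^ 2 :=
    funext fun n => rpow_toReal _ (norm_nonneg _)
  rwa [e] at this

lemma norm_l2 (f : L2) : ‖f‖ = Real.sqrt (∑' n, ‖f n‖ ^ 2) := by
  rw [lp.norm_eq_tsum_rpow (by norm_num : (0:ℝ) < ((2:ℝ≥0∞)).toReal) f]
  have e : (fun n => ‖f n‖ ^ ((2:ℝ≥0∞)).toReal) = fun n => ‖f n‖ ^ 2 :=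
    funext fun n => rpow_toReal _ (norm_nonneg _)
  rw [e, Real.sqrt_eq_rpow]
  norm_num

section family
variable (g : ℕ → H) (m₁ m₂ : ℝ)

/-- Summability of `∑ c n • g n` for `c ∈ ℓ²` under the upper bound. -/
lemma summable_synth (hm₂ : 0 ≤ m₂)
    (hup : ∀ (s : Finset ℕ) (b : ℕ → ℂ),
      ‖∑ n ∈ s, b n • g n‖ ≤ m₂ * Real.sqrt (∑ n ∈ s, ‖b n‖ ^ 2))
    (c : L2) : Summable fun n => (c n : ℂ) • g n := by
  rw [summable_iff_vanishing_norm]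
  intro ε hε
  have hsq := summable_sq c
  have hδ : 0 < (ε / (m₂ + 1)) ^ 2 := by positivity
  obtain ⟨s, hs⟩ := summable_iff_vanishing_norm.1 hsq _ hδ
  refine ⟨s, fun t ht => ?_⟩
  have h1 : ∑ n ∈ t, ‖c n‖ ^ 2 < (ε / (m₂ + 1)) ^ 2 := by
    have := hs t ht
    calc ∑ n ∈ t, ‖c n‖ ^ 2 ≤ ‖∑ n ∈ t, ‖c n‖ ^ 2‖ := le_abs_self _
    _ < _ := this
  have h2 : Real.sqrt (∑ n ∈ t, ‖c n‖ ^ 2) < ε / (m₂ + 1) := by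
    have := Real.sqrt_lt_sqrt (by positivity) h1
    rwa [Real.sqrt_sq (by positivity)] at this
  calc ‖∑ n ∈ t, c n • g n‖ ≤ m₂ * Real.sqrt (∑ n ∈ t, ‖c n‖ ^ 2) := hup t c
  _ ≤ m₂ * (ε / (m₂ + 1)) := by
    apply mul_le_mul_of_nonneg_left (le_of_lt h2) hm₂
  _ < ε := by
    rw [mul_div_assoc']
    rw [div_lt_iff₀ (by linarith)]
    nlinarith

lemma tendsto_sqrt_sum (c : L2) :
    Filter.Tendsto (fun s : Finset ℕ => Real.sqrt (∑ n ∈ s, ‖c n‖ ^ 2))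
      Filter.atTop (nhds ‖c‖) := by
  rw [norm_l2]
  exact (Real.continuous_sqrt.continuousAt).tendsto.comp (summable_sq c).hasSum

lemma norm_synth_le (hm₂ : 0 ≤ m₂)
    (hup : ∀ (s : Finset ℕ) (b : ℕ → ℂ),
      ‖∑ n ∈ s, b n • g n‖ ≤ m₂ * Real.sqrt (∑ n ∈ s, ‖b n‖ ^ 2))
    (c : L2) : ‖∑' n, (c n : ℂ) • g n‖ ≤ m₂ * ‖c‖ := by
  have hs := (summable_synth g m₂ hm₂ hup c).hasSum
  have h1 : Filter.Tendsto (fun s : Finset ℕ => ‖∑ n ∈ s, (c n : ℂ) • g n‖)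
      Filter.atTop (nhds ‖∑' n, (c n : ℂ) • g n‖) :=
    (continuous_norm.continuousAt).tendsto.comp hs
  have h2 : Filter.Tendsto (fun s : Finset ℕ => m₂ * Real.sqrt (∑ n ∈ s, ‖c n‖ ^ 2))
      Filter.atTop (nhds (m₂ * ‖c‖)) := (tendsto_sqrt_sum c).const_mul m₂
  exact le_of_tendsto_of_tendsto' h1 h2 (fun s => hup s c)

lemma le_norm_synth (hm₂ : 0 ≤ m₂)
    (hup : ∀ (s : Finset ℕ) (b : ℕ → ℂ),
      ‖∑ n ∈ s, b n • g n‖ ≤ m₂ * Real.sqrt (∑ n ∈ s, ‖b n‖ ^ 2))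
    (hlo : ∀ (s : Finset ℕ) (b : ℕ → ℂ),
      m₁ * Real.sqrt (∑ n ∈ s, ‖b n‖ ^ 2) ≤ ‖∑ n ∈ s, b n • g n‖)
    (c : L2) : m₁ * ‖c‖ ≤ ‖∑' n, (c n : ℂ) • g n‖ := by
  have hs := (summable_synth g m₂ hm₂ hup c).hasSum
  have h1 : Filter.Tendsto (fun s : Finset ℕ => ‖∑ n ∈ s, (c n : ℂ) • g n‖)
      Filter.atTop (nhds ‖∑' n, (c n : ℂ) • g n‖) :=
    (continuous_norm.continuousAt).tendsto.comp hs
  have h2 : Filter.Tendsto (fun s : Finset ℕ => m₁ * Real.sqrt (∑ n ∈ s, ‖c n‖ ^ 2))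
      Filter.atTop (nhds (m₁ * ‖c‖)) := (tendsto_sqrt_sum c).const_mul m₁
  exact le_of_tendsto_of_tendsto' h2 h1 (fun s => hlo s c)

lemma bessel (hm₂ : 0 ≤ m₂)
    (hup : ∀ (s : Finset ℕ) (b : ℕ → ℂ),
      ‖∑ n ∈ s, b n • g n‖ ≤ m₂ * Real.sqrt (∑ n ∈ s, ‖b n‖ ^ 2))
    (x : H) : Summable fun n => ‖(inner ℂ x (g n) : ℂ)‖ ^ 2 := by
  have key : ∀ s : Finset ℕ, ∑ n ∈ s, ‖(inner ℂ x (g n) : ℂ)‖ ^ 2 ≤ (m₂ * ‖x‖) ^ 2 := by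
    intro s
    set b : ℕ → ℂ := fun n => conj (inner ℂ x (g n) : ℂ) with hb
    have e1 : (inner ℂ x (∑ n ∈ s, b n • g n) : ℂ)
        = ∑ n ∈ s, ((‖(inner ℂ x (g n) : ℂ)‖ : ℂ)) ^ 2 := by
      rw [inner_sum]
      refine Finset.sum_congr rfl fun n _ => ?_
      rw [inner_smul_right, hb]
      exact RCLike.conj_mul _
    have e2 : ∑ n ∈ s, ‖(inner ℂ x (g n) : ℂ)‖ ^ 2
        = Complex.re (inner ℂ x (∑ n ∈ s, b n • g n) : ℂ) := by
      rw [e1, Complex.re_sum]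
      exact Finset.sum_congr rfl fun n _ => by
        rw [← Complex.ofReal_pow, Complex.ofReal_re]
    have e3 : Complex.re (inner ℂ x (∑ n ∈ s, b n • g n) : ℂ)
        ≤ ‖x‖ * (m₂ * Real.sqrt (∑ n ∈ s, ‖b n‖ ^ 2)) := by
      calc Complex.re (inner ℂ x (∑ n ∈ s, b n • g n) : ℂ)
          ≤ ‖(inner ℂ x (∑ n ∈ s, b n • g n) : ℂ)‖ := Complex.re_le_norm _
        _ ≤ ‖x‖ * ‖∑ n ∈ s, b n • g n‖ := norm_inner_le_norm _ _
        _ ≤ ‖x‖ * (m₂ * Real.sqrt (∑ n ∈ s, ‖b n‖ ^ 2)) :=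
            mul_le_mul_of_nonneg_left (hup s b) (norm_nonneg _)
    have e4 : ∑ n ∈ s, ‖b n‖ ^ 2 = ∑ n ∈ s, ‖(inner ℂ x (g n) : ℂ)‖ ^ 2 := by
      refine Finset.sum_congr rfl fun n _ => ?_
      rw [hb]; simp [norm_inner_symm]
    set t := ∑ n ∈ s, ‖(inner ℂ x (g n) : ℂ)‖ ^ 2 with ht
    have htn : 0 ≤ t := Finset.sum_nonneg fun n _ => by positivity
    have e5 : t ≤ ‖x‖ * (m₂ * Real.sqrt t) :=
      calc t = Complex.re (inner ℂ x (∑ n ∈ s, b n • g n) : ℂ) := e2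
      _ ≤ ‖x‖ * (m₂ * Real.sqrt (∑ n ∈ s, ‖b n‖ ^ 2)) := e3
      _ = ‖x‖ * (m₂ * Real.sqrt t) := by rw [e4]
    nlinarith [Real.sq_sqrt htn, Real.sqrt_nonneg t, norm_nonneg x,
      mul_nonneg hm₂ (norm_nonneg x)]
  exact summable_of_sum_le (fun n => by positivity) key
lemma key (hm₁ : 0 < m₁) (hm₂ : 0 ≤ m₂)
    (hup : ∀ (s : Finset ℕ) (b : ℕ → ℂ),
      ‖∑ n ∈ s, b n • g n‖ ≤ m₂ * Real.sqrt (∑ n ∈ s, ‖b n‖ ^ 2))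
    (hlo : ∀ (s : Finset ℕ) (b : ℕ → ℂ),
      m₁ * Real.sqrt (∑ n ∈ s, ‖b n‖ ^ 2) ≤ ‖∑ n ∈ s, b n • g n‖)
    (hcomp : ∀ x : H, (∀ n, (inner ℂ x (g n) : ℂ) = 0) → x = 0) :
    (∀ d : ℕ → ℂ, Summable (fun n => ‖d n‖ ^ 2) →
        ∃ u : H, ∀ n, (inner ℂ u (g n) : ℂ) = d n) ∧
    (∀ x : H, m₁ * ‖x‖ ≤ Real.sqrt (∑' n, ‖(inner ℂ x (g n) : ℂ)‖ ^ 2)) := by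
  classical
  -- the synthesis operator
  let Sl : L2 →ₗ[ℂ] H :=
    { toFun := fun c => ∑' n, (c n : ℂ) • g n
      map_add' := fun c d => by
        have hc := summable_synth g m₂ hm₂ hup c
        have hd := summable_synth g m₂ hm₂ hup d
        have e : (fun n => ((c + d) n : ℂ) • g n)
            = fun n => (c n : ℂ) • g n + (d n : ℂ) • g n := by
          funext n
          rw [lp.coeFn_add]
          simp [add_smul]
        simp only [e]
        exact Summable.tsum_add hc hd
      map_smul' := fun a c => by
        have hc := summable_synth g m₂ hm₂ hup c
        have e : (fun n => ((a • c) n : ℂ) • g n)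
            = fun n => a • ((c n : ℂ) • g n) := by
          funext n
          rw [lp.coeFn_smul]
          simp [smul_smul]
        simp only [e, RingHom.id_apply]
        exact ((hc.hasSum.const_smul a).tsum_eq).trans rfl }
  let S : L2 →L[ℂ] H := Sl.mkContinuous m₂ (fun c => norm_synth_le g m₂ hm₂ hup c)
  have hS : ∀ c : L2, S c = ∑' n, (c n : ℂ) • g n := fun c => rfl
  have hSsingle : ∀ n : ℕ, S (lp.single 2 n (1 : ℂ)) = g n := by
    intro n
    rw [hS]
    rw [tsum_eq_single n]
    · rw [lp.single_apply_self, one_smul]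
    · intro m hm
      rw [lp.single_apply_ne 2 n _ hm, zero_smul]
  have hlow : ∀ c : L2, m₁ * ‖c‖ ≤ ‖S c‖ := fun c =>
    le_norm_synth g m₁ m₂ hm₂ hup hlo c
  have hanti : AntilipschitzWith (m₁⁻¹).toNNReal S := by
    apply ContinuousLinearMap.antilipschitz_of_bound
    intro c
    rw [Real.coe_toNNReal _ (by positivity), inv_mul_eq_div, le_div_iff₀ hm₁, mul_comm]
    exact hlow c
  have hinj : Function.Injective S := hanti.injective
  have hclosed : IsClosed (Set.range S) := hanti.isClosed_range S.uniformContinuous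
  have hrange : LinearMap.range (S : L2 →ₗ[ℂ] H) = ⊤ := by
    have hcl : IsClosed ((LinearMap.range (S : L2 →ₗ[ℂ] H) : Submodule ℂ H) : Set H) := by
      rwa [LinearMap.coe_range]
    haveI : CompleteSpace (LinearMap.range (S : L2 →ₗ[ℂ] H)) := hcl.completeSpace_coe
    rw [← Submodule.orthogonal_eq_bot_iff]
    rw [Submodule.eq_bot_iff]
    intro x hx
    apply hcomp
    intro n
    have h0 : (inner ℂ (S (lp.single 2 n (1:ℂ))) x : ℂ) = 0 :=
      (Submodule.mem_orthogonal _ _).1 hx _ (LinearMap.mem_range_self _ _)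
    rw [hSsingle n] at h0
    rw [← inner_conj_symm, h0, map_zero]
  have hker : LinearMap.ker (S : L2 →ₗ[ℂ] H) = ⊥ := LinearMap.ker_eq_bot.mpr hinj
  let E := ContinuousLinearEquiv.ofBijective S hker hrange
  have hE : ∀ c : L2, E c = S c := fun c => by
    rw [ContinuousLinearEquiv.coeFn_ofBijective]
  constructor
  · -- existence
    intro d hd
    have hd' : Summable fun n => ‖(conj (d n) : ℂ)‖ ^ 2 := by
      simpa using hd
    let d' : L2 := toL2 (fun n => conj (d n)) hd'
    let G : H →L[ℂ] ℂ := (innerSL ℂ d').comp (E.symm : H →L[ℂ] L2)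
    refine ⟨(InnerProductSpace.toDual ℂ H).symm G, fun n => ?_⟩
    rw [InnerProductSpace.toDual_symm_apply]
    show (inner ℂ d' (E.symm (g n)) : ℂ) = d n
    have h1 : E.symm (g n) = lp.single 2 n (1 : ℂ) := by
      rw [ContinuousLinearEquiv.symm_apply_eq, hE, hSsingle]
    rw [h1, lp.inner_single_right]
    show inner ℂ ((d' : ∀ _ : ℕ, ℂ) n) (1 : ℂ) = d n
    simp [d', toL2, RCLike.inner_apply]
  · -- frame lower bound
    intro x
    obtain ⟨c, hc⟩ : ∃ c, S c = x := LinearMap.range_eq_top.mp hrange x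
    have hb := bessel g m₂ hm₂ hup x
    let B : L2 := toL2 (fun n => (inner ℂ x (g n) : ℂ)) hb
    have hcs : Summable fun n => ‖(conj (c n) : ℂ)‖ ^ 2 := by
      simpa using summable_sq c
    let c' : L2 := toL2 (fun n => conj (c n)) hcs
    have hnc : ‖c'‖ = ‖c‖ := by
      rw [norm_l2, norm_l2]
      congr 1
      refine tsum_congr fun n => ?_
      simp [c', toL2]
    have hxin : (inner ℂ x x : ℂ) = (inner ℂ c' B : ℂ) := by
      rw [lp.inner_eq_tsum]
      have hmt := ContinuousLinearMap.map_tsum (innerSL ℂ x) (summable_synth g m₂ hm₂ hup c)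
      simp only [innerSL_apply_apply] at hmt
      nth_rewrite 2 [← hc]
      rw [hS, hmt]
      refine tsum_congr fun n => ?_
      show (inner ℂ x ((c n : ℂ) • g n) : ℂ) = (inner ℂ ((c' : ∀ _ : ℕ, ℂ) n) ((B : ∀ _ : ℕ, ℂ) n) : ℂ)
      rw [inner_smul_right, RCLike.inner_apply]
      simp [c', B, toL2, mul_comm]
  -- use ‖x‖² = re ⟪x,x⟫ ≤ ‖c‖ ‖B‖
    have hxsq : (‖x‖ : ℝ) ^ 2 ≤ ‖c‖ * ‖B‖ := by
      have h2 : (‖x‖ : ℝ) ^ 2 = Complex.re (inner ℂ x x : ℂ) := by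
        rw [← inner_self_eq_norm_sq (𝕜 := ℂ) x, RCLike.re_to_complex]
      rw [h2, hxin]
      calc Complex.re (inner ℂ c' B : ℂ) ≤ ‖(inner ℂ c' B : ℂ)‖ := Complex.re_le_norm _
        _ ≤ ‖c'‖ * ‖B‖ := norm_inner_le_norm _ _
        _ = ‖c‖ * ‖B‖ := by rw [hnc]
    have hcb : ‖c‖ ≤ ‖x‖ / m₁ := by
      rw [le_div_iff₀ hm₁, mul_comm]
      calc m₁ * ‖c‖ ≤ ‖S c‖ := hlow c
        _ = ‖x‖ := by rw [hc]
    have hBn : ‖B‖ = Real.sqrt (∑' n, ‖(inner ℂ x (g n) : ℂ)‖ ^ 2) := by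
      rw [norm_l2]
      rfl
    rcases eq_or_lt_of_le (norm_nonneg x) with h0 | h0
    · rw [← h0, mul_zero]
      rw [← hBn]
      exact norm_nonneg _
    · rw [← hBn]
      have hBnn : 0 ≤ ‖B‖ := norm_nonneg _
      have hcb' : m₁ * ‖c‖ ≤ ‖x‖ := by
        calc m₁ * ‖c‖ ≤ ‖S c‖ := hlow c
          _ = ‖x‖ := by rw [hc]
      nlinarith [mul_le_mul_of_nonneg_right hcb' hBnn,
        mul_le_mul_of_nonneg_left hxsq (le_of_lt hm₁)]

end family
end MomentAux

open MomentAux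

/-- Stability of the moment problem `(u, vₙ) = wₙ` (Lemma 5 of Bondarenko 2018):
if `{ṽₙ/‖ṽₙ‖}` is a Riesz basis, `(ũ, ṽₙ) = w̃ₙ`, and
`Z = (Σ ‖ṽₙ/‖ṽₙ‖ − vₙ/‖vₙ‖‖²)^{1/2}`, `T = (Σ |w̃ₙ/‖ṽₙ‖ − wₙ/‖vₙ‖|²)^{1/2}`
with `Z` sufficiently small, then the moment problem `(u, vₙ) = wₙ` has a unique
solution `u ∈ H` with `‖u − ũ‖ ≤ C(Z + T)`, `C` depending only on `{ṽₙ}`, `ũ`. -/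
theorem moment_problem_stability (vt : ℕ → H) (wt : ℕ → ℂ) (ut : H)
    (hvt : ∀ n, vt n ≠ 0)
    (hbasis : IsRieszBasis fun n => nrml (vt n))
    (hut : ∀ n, (inner ℂ ut (vt n) : ℂ) = wt n) :
    ∃ δ C : ℝ, 0 < δ ∧ 0 < C ∧
      ∀ (v : ℕ → H) (w : ℕ → ℂ), (∀ n, v n ≠ 0) →
        Summable (fun n => ‖nrml (vt n) - nrml (v n)‖ ^ 2) →
        Summable (fun n => ‖wt n / (‖vt n‖ : ℂ) - w n / (‖v n‖ : ℂ)‖ ^ 2) →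
        Real.sqrt (∑' n, ‖nrml (vt n) - nrml (v n)‖ ^ 2) ≤ δ →
        (∃! u : H, ∀ n, (inner ℂ u (v n) : ℂ) = w n) ∧
        ∀ u : H, (∀ n, (inner ℂ u (v n) : ℂ) = w n) →
          ‖u - ut‖ ≤ C * (Real.sqrt (∑' n, ‖nrml (vt n) - nrml (v n)‖ ^ 2) +
            Real.sqrt (∑' n, ‖wt n / (‖vt n‖ : ℂ) - w n / (‖v n‖ : ℂ)‖ ^ 2)) := by
  classical
  obtain ⟨hcompl, M₁, M₂, hM₁, hM₂, hRB⟩ := hbasis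
  set m₁ : ℝ := Real.sqrt M₁ with hm₁def
  set m₂ : ℝ := Real.sqrt M₂ with hm₂def
  have hm₁ : 0 < m₁ := Real.sqrt_pos.2 hM₁
  have hm₂0 : 0 ≤ m₂ := Real.sqrt_nonneg _
  have hupφ : ∀ (s : Finset ℕ) (b : ℕ → ℂ),
      ‖∑ n ∈ s, b n • nrml (vt n)‖ ≤ m₂ * Real.sqrt (∑ n ∈ s, ‖b n‖ ^ 2) := by
    intro s b
    have h := (hRB s b).2
    calc ‖∑ n ∈ s, b n • nrml (vt n)‖
        = Real.sqrt (‖∑ n ∈ s, b n • nrml (vt n)‖ ^ 2) :=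
          (Real.sqrt_sq (norm_nonneg _)).symm
      _ ≤ Real.sqrt (M₂ * ∑ n ∈ s, ‖b n‖ ^ 2) := Real.sqrt_le_sqrt h
      _ = m₂ * Real.sqrt (∑ n ∈ s, ‖b n‖ ^ 2) := Real.sqrt_mul (le_of_lt hM₂) _
  have hloφ : ∀ (s : Finset ℕ) (b : ℕ → ℂ),
      m₁ * Real.sqrt (∑ n ∈ s, ‖b n‖ ^ 2) ≤ ‖∑ n ∈ s, b n • nrml (vt n)‖ := by
    intro s b
    have h := (hRB s b).1
    calc m₁ * Real.sqrt (∑ n ∈ s, ‖b n‖ ^ 2)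
        = Real.sqrt (M₁ * ∑ n ∈ s, ‖b n‖ ^ 2) := (Real.sqrt_mul (le_of_lt hM₁) _).symm
      _ ≤ Real.sqrt (‖∑ n ∈ s, b n • nrml (vt n)‖ ^ 2) := Real.sqrt_le_sqrt h
      _ = ‖∑ n ∈ s, b n • nrml (vt n)‖ := Real.sqrt_sq (norm_nonneg _)
  have frameφ := (key (fun n => nrml (vt n)) m₁ m₂ hm₁ hm₂0 hupφ hloφ hcompl).2
  refine ⟨m₁ / 2, (2 / m₁) * (1 + ‖ut‖), by positivity, by positivity, ?_⟩
  intro v w hv hsumZ hsumT hZle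
  set Z : ℝ := Real.sqrt (∑' n, ‖nrml (vt n) - nrml (v n)‖ ^ 2) with hZdef
  set T : ℝ := Real.sqrt (∑' n, ‖wt n / (‖vt n‖ : ℂ) - w n / (‖v n‖ : ℂ)‖ ^ 2) with hTdef
  have hZ0 : 0 ≤ Z := Real.sqrt_nonneg _
  have hT0 : 0 ≤ T := Real.sqrt_nonneg _
  -- finite tail bound for the error family
  have hefin : ∀ s : Finset ℕ,
      Real.sqrt (∑ n ∈ s, ‖nrml (vt n) - nrml (v n)‖ ^ 2) ≤ Z := by
    intro s
    apply Real.sqrt_le_sqrt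
    exact Summable.sum_le_tsum s (fun n _ => by positivity) hsumZ
  have hEfin : ∀ (s : Finset ℕ) (b : ℕ → ℂ),
      ‖∑ n ∈ s, b n • (nrml (vt n) - nrml (v n))‖
        ≤ Z * Real.sqrt (∑ n ∈ s, ‖b n‖ ^ 2) := by
    intro s b
    calc ‖∑ n ∈ s, b n • (nrml (vt n) - nrml (v n))‖
        ≤ ∑ n ∈ s, ‖b n • (nrml (vt n) - nrml (v n))‖ := norm_sum_le _ _
      _ = ∑ n ∈ s, ‖b n‖ * ‖nrml (vt n) - nrml (v n)‖ := by
          refine Finset.sum_congr rfl fun n _ => norm_smul _ _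
      _ ≤ Real.sqrt (∑ n ∈ s, ‖b n‖ ^ 2) *
            Real.sqrt (∑ n ∈ s, ‖nrml (vt n) - nrml (v n)‖ ^ 2) :=
          Real.sum_mul_le_sqrt_mul_sqrt s _ _
      _ ≤ Real.sqrt (∑ n ∈ s, ‖b n‖ ^ 2) * Z := by
          exact mul_le_mul_of_nonneg_left (hefin s) (Real.sqrt_nonneg _)
      _ = Z * Real.sqrt (∑ n ∈ s, ‖b n‖ ^ 2) := mul_comm _ _
  have hsplit : ∀ (s : Finset ℕ) (b : ℕ → ℂ),
      ∑ n ∈ s, b n • nrml (v n)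
        = ∑ n ∈ s, b n • nrml (vt n) - ∑ n ∈ s, b n • (nrml (vt n) - nrml (v n)) := by
    intro s b
    rw [← Finset.sum_sub_distrib]
    refine Finset.sum_congr rfl fun n _ => ?_
    rw [← smul_sub]
    congr 1
    abel
  have hupψ : ∀ (s : Finset ℕ) (b : ℕ → ℂ),
      ‖∑ n ∈ s, b n • nrml (v n)‖ ≤ (m₂ + m₁ / 2) * Real.sqrt (∑ n ∈ s, ‖b n‖ ^ 2) := by
    intro s b
    rw [hsplit s b]
    calc ‖∑ n ∈ s, b n • nrml (vt n) - ∑ n ∈ s, b n • (nrml (vt n) - nrml (v n))‖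
        ≤ ‖∑ n ∈ s, b n • nrml (vt n)‖ + ‖∑ n ∈ s, b n • (nrml (vt n) - nrml (v n))‖ :=
          norm_sub_le _ _
      _ ≤ m₂ * Real.sqrt (∑ n ∈ s, ‖b n‖ ^ 2) + Z * Real.sqrt (∑ n ∈ s, ‖b n‖ ^ 2) :=
          add_le_add (hupφ s b) (hEfin s b)
      _ ≤ (m₂ + m₁ / 2) * Real.sqrt (∑ n ∈ s, ‖b n‖ ^ 2) := by
          have := Real.sqrt_nonneg (∑ n ∈ s, ‖b n‖ ^ 2)
          nlinarith
  have hloψ : ∀ (s : Finset ℕ) (b : ℕ → ℂ),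
      (m₁ / 2) * Real.sqrt (∑ n ∈ s, ‖b n‖ ^ 2) ≤ ‖∑ n ∈ s, b n • nrml (v n)‖ := by
    intro s b
    rw [hsplit s b]
    have h1 : ‖∑ n ∈ s, b n • nrml (vt n)‖ - ‖∑ n ∈ s, b n • (nrml (vt n) - nrml (v n))‖
        ≤ ‖∑ n ∈ s, b n • nrml (vt n) - ∑ n ∈ s, b n • (nrml (vt n) - nrml (v n))‖ :=
      norm_sub_norm_le _ _
    have h2 := hloφ s b
    have h3 := hEfin s b
    have := Real.sqrt_nonneg (∑ n ∈ s, ‖b n‖ ^ 2)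
    nlinarith
  -- completeness of the perturbed family
  have hcompψ : ∀ x : H, (∀ n, (inner ℂ x (nrml (v n)) : ℂ) = 0) → x = 0 := by
    intro x hx
    have h1 : ∀ n, (inner ℂ x (nrml (vt n)) : ℂ) = inner ℂ x (nrml (vt n) - nrml (v n)) := by
      intro n
      rw [inner_sub_right, hx n, sub_zero]
    have h2 : Summable fun n => ‖(inner ℂ x (nrml (vt n)) : ℂ)‖ ^ 2 :=
      bessel _ m₂ hm₂0 hupφ x
    have h4 : Summable fun n => ‖x‖ ^ 2 * ‖nrml (vt n) - nrml (v n)‖ ^ 2 :=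
      hsumZ.mul_left _
    have h3 : (∑' n, ‖(inner ℂ x (nrml (vt n)) : ℂ)‖ ^ 2)
        ≤ ∑' n, ‖x‖ ^ 2 * ‖nrml (vt n) - nrml (v n)‖ ^ 2 := by
      refine Summable.tsum_le_tsum (fun n => ?_) h2 h4
      rw [h1 n]
      have := norm_inner_le_norm (𝕜 := ℂ) x (nrml (vt n) - nrml (v n))
      nlinarith [norm_nonneg (inner ℂ x (nrml (vt n) - nrml (v n)) : ℂ),
        norm_nonneg x, norm_nonneg (nrml (vt n) - nrml (v n))]
    have h5 : Real.sqrt (∑' n, ‖(inner ℂ x (nrml (vt n)) : ℂ)‖ ^ 2) ≤ ‖x‖ * Z := by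
      calc Real.sqrt (∑' n, ‖(inner ℂ x (nrml (vt n)) : ℂ)‖ ^ 2)
          ≤ Real.sqrt (∑' n, ‖x‖ ^ 2 * ‖nrml (vt n) - nrml (v n)‖ ^ 2) :=
            Real.sqrt_le_sqrt h3
        _ = Real.sqrt (‖x‖ ^ 2 * ∑' n, ‖nrml (vt n) - nrml (v n)‖ ^ 2) := by
            rw [tsum_mul_left]
        _ = ‖x‖ * Z := by
            rw [Real.sqrt_mul (by positivity), Real.sqrt_sq (norm_nonneg _), hZdef]
    have h6 := frameφ x
    have h7 : m₁ * ‖x‖ ≤ ‖x‖ * (m₁ / 2) :=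
      le_trans h6 (le_trans h5 (mul_le_mul_of_nonneg_left hZle (norm_nonneg _)))
    have h8 : ‖x‖ = 0 := by nlinarith [norm_nonneg x]
    exact norm_eq_zero.1 h8
  have keyψ := key (fun n => nrml (v n)) (m₁ / 2) (m₂ + m₁ / 2)
    (by positivity) (by positivity) hupψ hloψ hcompψ
  -- translation of the moment problem
  have hψv : ∀ (u : H) (n : ℕ),
      (inner ℂ u (nrml (v n)) : ℂ) = (‖v n‖ : ℂ)⁻¹ * inner ℂ u (v n) := by
    intro u n
    rw [nrml, inner_smul_right]
    norm_num
  have hvne : ∀ n, (‖v n‖ : ℂ) ≠ 0 := by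
    intro n
    simpa using (norm_ne_zero_iff.2 (hv n))
  have hiff : ∀ (u : H) (n : ℕ),
      ((inner ℂ u (v n) : ℂ) = w n) ↔ ((inner ℂ u (nrml (v n)) : ℂ) = w n / (‖v n‖ : ℂ)) := by
    intro u n
    rw [hψv u n]
    constructor
    · intro h; rw [h]; field_simp
    · intro h
      rw [inv_mul_eq_div, div_eq_div_iff (hvne n) (hvne n)] at h
      exact mul_right_cancel₀ (hvne n) h
  have hcφ : ∀ n, (inner ℂ ut (nrml (vt n)) : ℂ) = wt n / (‖vt n‖ : ℂ) := by
    intro n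
    rw [nrml, inner_smul_right, hut n]
    rw [div_eq_inv_mul]
    norm_num
  have hsumc : Summable fun n => ‖wt n / (‖vt n‖ : ℂ)‖ ^ 2 := by
    have := bessel _ m₂ hm₂0 hupφ ut
    refine this.congr fun n => ?_
    rw [hcφ n]
  have hsumd : Summable fun n => ‖w n / (‖v n‖ : ℂ)‖ ^ 2 := by
    have hA := toL2 _ hsumc
    have hA2 := toL2 _ hsumT
    have := summable_sq (toL2 _ hsumc - toL2 _ hsumT)
    refine this.congr fun n => ?_
    congr 1
    rw [lp.coeFn_sub, Pi.sub_apply]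
    show ‖(wt n / (‖vt n‖ : ℂ)) - (wt n / (‖vt n‖ : ℂ) - w n / (‖v n‖ : ℂ))‖ = _
    congr 1
    ring
  obtain ⟨u₀, hu₀pre⟩ := keyψ.1 _ hsumd
  have hu₀ : ∀ n, (inner ℂ u₀ (nrml (v n)) : ℂ) = w n / (‖v n‖ : ℂ) := hu₀pre
  have huniq : ∀ u u' : H, (∀ n, (inner ℂ u (v n) : ℂ) = w n) →
      (∀ n, (inner ℂ u' (v n) : ℂ) = w n) → u = u' := by
    intro u u' hu hu'
    have : ∀ n, (inner ℂ (u - u') (nrml (v n)) : ℂ) = 0 := by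
      intro n
      rw [hψv]
      rw [inner_sub_left, hu n, hu' n, sub_self, mul_zero]
    have := hcompψ _ this
    exact sub_eq_zero.1 this
  constructor
  · exact ⟨u₀, fun n => (hiff u₀ n).2 (hu₀ n), fun y hy => huniq y u₀ hy
      (fun n => (hiff u₀ n).2 (hu₀ n))⟩
  -- the estimate
  intro u hu
  have hsumQ : Summable fun n => ‖(inner ℂ ut (nrml (vt n) - nrml (v n)) : ℂ)‖ ^ 2 := by
    refine Summable.of_nonneg_of_le (fun n => by positivity) (fun n => ?_) (hsumZ.mul_left (‖ut‖ ^ 2))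
    have := norm_inner_le_norm (𝕜 := ℂ) ut (nrml (vt n) - nrml (v n))
    nlinarith [norm_nonneg (inner ℂ ut (nrml (vt n) - nrml (v n)) : ℂ),
      norm_nonneg ut, norm_nonneg (nrml (vt n) - nrml (v n))]
  set P : L2 := toL2 _ hsumT with hPdef
  set Q : L2 := toL2 _ hsumQ with hQdef
  have hxψ : ∀ n, (inner ℂ (ut - u) (nrml (v n)) : ℂ)
      = (wt n / (‖vt n‖ : ℂ) - w n / (‖v n‖ : ℂ)) - inner ℂ ut (nrml (vt n) - nrml (v n)) := by
    intro n
    rw [inner_sub_left, (hiff u n).1 (hu n), inner_sub_right, hcφ n]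
    ring
  have hframe := keyψ.2 (ut - u)
  have hPQ : Real.sqrt (∑' n, ‖(inner ℂ (ut - u) ((fun n => nrml (v n)) n) : ℂ)‖ ^ 2)
      = ‖P - Q‖ := by
    rw [norm_l2]
    congr 1
    refine tsum_congr fun n => ?_
    congr 1
    rw [lp.coeFn_sub, Pi.sub_apply]
    show _ = ‖(wt n / (‖vt n‖ : ℂ) - w n / (‖v n‖ : ℂ)) - inner ℂ ut (nrml (vt n) - nrml (v n))‖
    rw [hxψ n]
  have hPn : ‖P‖ = T := by rw [norm_l2, hTdef]; rfl
  have hQn : ‖Q‖ ≤ ‖ut‖ * Z := by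
    rw [norm_l2]
    have h3 : (∑' n, ‖(Q : ∀ _ : ℕ, ℂ) n‖ ^ 2)
        ≤ ∑' n, ‖ut‖ ^ 2 * ‖nrml (vt n) - nrml (v n)‖ ^ 2 := by
      refine Summable.tsum_le_tsum (fun n => ?_) (summable_sq Q) (hsumZ.mul_left _)
      show ‖(inner ℂ ut (nrml (vt n) - nrml (v n)) : ℂ)‖ ^ 2 ≤ _
      have := norm_inner_le_norm (𝕜 := ℂ) ut (nrml (vt n) - nrml (v n))
      nlinarith [norm_nonneg (inner ℂ ut (nrml (vt n) - nrml (v n)) : ℂ),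
        norm_nonneg ut, norm_nonneg (nrml (vt n) - nrml (v n))]
    calc Real.sqrt (∑' n, ‖(Q : ∀ _ : ℕ, ℂ) n‖ ^ 2)
        ≤ Real.sqrt (∑' n, ‖ut‖ ^ 2 * ‖nrml (vt n) - nrml (v n)‖ ^ 2) := Real.sqrt_le_sqrt h3
      _ = ‖ut‖ * Z := by
          rw [tsum_mul_left, Real.sqrt_mul (by positivity), Real.sqrt_sq (norm_nonneg _), hZdef]
  have hmain : (m₁ / 2) * ‖ut - u‖ ≤ T + ‖ut‖ * Z := by
    calc (m₁ / 2) * ‖ut - u‖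
        ≤ Real.sqrt (∑' n, ‖(inner ℂ (ut - u) ((fun n => nrml (v n)) n) : ℂ)‖ ^ 2) := hframe
      _ = ‖P - Q‖ := hPQ
      _ ≤ ‖P‖ + ‖Q‖ := norm_sub_le _ _
      _ ≤ T + ‖ut‖ * Z := by rw [hPn]; exact add_le_add (le_refl _) hQn
  rw [show ‖u - ut‖ = ‖ut - u‖ from norm_sub_rev _ _]
  have h9 : T + ‖ut‖ * Z ≤ (1 + ‖ut‖) * (Z + T) := by nlinarith [hZ0, hT0, norm_nonneg ut]
  have h10 : (m₁ / 2) * ‖ut - u‖ ≤ (1 + ‖ut‖) * (Z + T) := hmain.trans h9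
  calc ‖ut - u‖ = (2 / m₁) * ((m₁ / 2) * ‖ut - u‖) := by field_simp
    _ ≤ (2 / m₁) * ((1 + ‖ut‖) * (Z + T)) :=
        mul_le_mul_of_nonneg_left h10 (by positivity)
    _ = (2 / m₁) * (1 + ‖ut‖) * (Z + T) := by ring
end
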